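/- Let Q = {x ∈ ℝⁿ : Ax ≤ b} be a nonempty polyhedron, let z be a vertex of Q and let x ∈ Q with x ≠ z. Then N(x) ∩ N(z) is a cone whose dimension is strictly less than n, and moreover N(x) ∩ int N(z) = ∅, where int denotes the topological interior in ℝⁿ. -/

import Mathlib

open Set RealInnerProductSpace

noncomputable section

/-- Normal cone of a convex set `Q` at a point `z`. -/
def normalCone {n : ℕ} (Q : Set (EuclideanSpace ℝ (Fin n))) (z : EuclideanSpace ℝ (Fin n)) :
    Set (EuclideanSpace ℝ (Fin n)) :=
  {v | ∀ y ∈ Q, ⟪v, y - z⟫ ≤ 0}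

/-- If `z` is a vertex of the polyhedron `Q` and `x ∈ Q`, `x ≠ z`, then `N(x) ∩ N(z)` has
dimension `< n` and `N(x)` misses the interior of `N(z)`. -/
theorem stmt1 {n m : ℕ} (A : Fin m → EuclideanSpace ℝ (Fin n)) (b : Fin m → ℝ)
    (Q : Set (EuclideanSpace ℝ (Fin n)))
    (hQ : Q = {x | ∀ i, ⟪A i, x⟫ ≤ b i}) (hne : Q.Nonempty)
    (z x : EuclideanSpace ℝ (Fin n))
    (hz : z ∈ Set.extremePoints ℝ Q) (hx : x ∈ Q) (hxz : x ≠ z) :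
    Module.finrank ℝ (Submodule.span ℝ (normalCone Q x ∩ normalCone Q z)) < n ∧
    normalCone Q x ∩ interior (normalCone Q z) = ∅ := by
  have hzQ : z ∈ Q := hz.1
  have hxz' : x - z ≠ 0 := sub_ne_zero.mpr hxz
  constructor
  · set f : EuclideanSpace ℝ (Fin n) →ₗ[ℝ] ℝ := (innerSL ℝ (x - z)).toLinearMap with hfdef
    have hker : LinearMap.ker f < ⊤ := by
      rw [lt_top_iff_ne_top]
      intro h
      have hmem : x - z ∈ LinearMap.ker f := by rw [h]; trivial
      have : f (x - z) = 0 := hmem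
      have : ⟪x - z, x - z⟫ = 0 := this
      exact hxz' (inner_self_eq_zero.mp this)
    have hsub : Submodule.span ℝ (normalCone Q x ∩ normalCone Q z) ≤ LinearMap.ker f := by
      rw [Submodule.span_le]
      rintro v ⟨hvx, hvz⟩
      have h1 : ⟪v, z - x⟫ ≤ 0 := hvx z hzQ
      have h2 : ⟪v, x - z⟫ ≤ 0 := hvz x hx
      have h1' : -⟪v, x - z⟫ ≤ 0 := by
        rw [← inner_neg_right, neg_sub]; exact h1
      have : ⟪v, x - z⟫ = 0 := le_antisymm h2 (by linarith)
      show ⟪x - z, v⟫ = 0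
      rw [real_inner_comm]; exact this
    calc Module.finrank ℝ (Submodule.span ℝ (normalCone Q x ∩ normalCone Q z))
        ≤ Module.finrank ℝ (LinearMap.ker f) := Submodule.finrank_mono hsub
      _ < Module.finrank ℝ (EuclideanSpace ℝ (Fin n)) := Submodule.finrank_lt hker.ne
      _ = n := finrank_euclideanSpace_fin
  · ext v
    simp only [Set.mem_inter_iff, Set.mem_empty_iff_false, iff_false, not_and]
    intro hvx hvi
    obtain ⟨ε, hε, hball⟩ := Metric.isOpen_iff.mp isOpen_interior v hvi
    set u : EuclideanSpace ℝ (Fin n) := (ε / 2 / ‖x - z‖) • (x - z) with hu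
    have hnorm : ‖u‖ = ε / 2 := by
      rw [hu, norm_smul, Real.norm_eq_abs, abs_of_pos
        (div_pos (by linarith) (norm_pos_iff.mpr hxz'))]
      exact div_mul_cancel₀ _ (norm_ne_zero_iff.mpr hxz')
    have hmem : v + u ∈ normalCone Q z := interior_subset <| hball <| by
      simp [Metric.mem_ball, dist_eq_norm, hnorm]
      linarith
    have h1 : ⟪v + u, x - z⟫ ≤ 0 := hmem x hx
    have h2 : ⟪v, z - x⟫ ≤ 0 := hvx z hzQ
    have h2' : -⟪v, x - z⟫ ≤ 0 := by rw [← inner_neg_right, neg_sub]; exact h2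
    have hupos : (0:ℝ) < ⟪u, x - z⟫ := by
      rw [hu, real_inner_smul_left, real_inner_self_eq_norm_sq]
      have hn : (0:ℝ) < ‖x - z‖ := norm_pos_iff.mpr hxz'
      positivity
    rw [inner_add_left] at h1
    linarith
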